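/- Let p_{k,m} and q_{k,m} denote the coefficients of t^m in P_k(t) and Q_k(t) respectively. If k ≡ m (mod 2) with n = (k − m)/2, then m! · q_{k,m} = Σ_{j=0}^{n} (m+j)! · p_{k−j, m+j}; moreover q_{k,m} = 0 whenever k − m is odd. -/

import Mathlib

open Polynomial

/-- The Laplace polynomials `P_k`. -/
noncomputable def laplaceP : ℕ → Polynomial ℝ
  | 0 => 1
  | k + 1 => X * laplaceP k + derivative (laplaceP k)

/-- The Laplace polynomials `Q_k`. -/
noncomputable def laplaceQ : ℕ → Polynomial ℝ
  | 0 => 1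
  | k + 1 => laplaceP (k + 1) + derivative (laplaceQ k)

lemma laplaceP_coeff_zero_of_lt : ∀ k m : ℕ, k < m → (laplaceP k).coeff m = 0
  | 0, m, h => by
    have hm : m ≠ 0 := by omega
    simp [laplaceP, Polynomial.coeff_one, hm]
  | k + 1, m, h => by
    obtain ⟨m, rfl⟩ : ∃ m', m = m' + 1 := ⟨m - 1, by omega⟩
    simp only [laplaceP, Polynomial.coeff_add, Polynomial.coeff_X_mul,
      Polynomial.coeff_derivative]
    rw [laplaceP_coeff_zero_of_lt k m (by omega),
        laplaceP_coeff_zero_of_lt k (m + 1 + 1) (by omega)]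
    simp

lemma laplaceP_coeff_zero_of_odd : ∀ k m : ℕ, Odd (k + m) → (laplaceP k).coeff m = 0
  | 0, m, h => by
    have : m ≠ 0 := by rintro rfl; simp at h
    simp [laplaceP, Polynomial.coeff_one, this]
  | k + 1, m, h => by
    rcases m with _ | m
    · simp only [laplaceP, Polynomial.coeff_add, Polynomial.mul_coeff_zero,
        Polynomial.coeff_X_zero, Polynomial.coeff_derivative]
      obtain ⟨c, hc⟩ := h
      rw [laplaceP_coeff_zero_of_odd k 1 ⟨c, by omega⟩]
      simp
    · simp only [laplaceP, Polynomial.coeff_add, Polynomial.coeff_X_mul,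
        Polynomial.coeff_derivative]
      obtain ⟨c, hc⟩ := h
      rw [laplaceP_coeff_zero_of_odd k m ⟨c - 1, by omega⟩,
          laplaceP_coeff_zero_of_odd k (m + 1 + 1) ⟨c, by omega⟩]
      simp

lemma laplaceQ_eq_sum (k : ℕ) :
    laplaceQ k = ∑ j ∈ Finset.range (k + 1), derivative^[j] (laplaceP (k - j)) := by
  induction k with
  | zero => simp [laplaceQ, laplaceP]
  | succ k ih =>
    rw [Finset.sum_range_succ' (fun j => derivative^[j] (laplaceP (k + 1 - j))) (k + 1)]
    have h1 : ∑ j ∈ Finset.range (k + 1), derivative^[j + 1] (laplaceP (k + 1 - (j + 1))) =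
        derivative (∑ j ∈ Finset.range (k + 1), derivative^[j] (laplaceP (k - j))) := by
      rw [map_sum]
      refine Finset.sum_congr rfl fun j hj => ?_
      rw [Function.iterate_succ_apply', Nat.succ_sub_succ]
    rw [h1, show laplaceQ (k + 1) = laplaceP (k + 1) + derivative (laplaceQ k) from rfl, ih]
    simp [add_comm]

/-- If `k ≡ m (mod 2)` with `n = (k − m)/2`, then
`m!·q_{k,m} = Σ_{j=0}^{n} (m+j)!·p_{k−j, m+j}`; moreover `q_{k,m} = 0` when `k − m` is odd. -/
theorem laplaceQ_coeff_via_laplaceP (k m : ℕ) :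
    (∀ n : ℕ, m ≤ k → k - m = 2 * n →
      (m.factorial : ℝ) * (laplaceQ k).coeff m =
        ∑ j ∈ Finset.range (n + 1),
          ((m + j).factorial : ℝ) * (laplaceP (k - j)).coeff (m + j)) ∧
      (Odd ((k : ℤ) - m) → (laplaceQ k).coeff m = 0) := by
  have hco : (laplaceQ k).coeff m =
      ∑ j ∈ Finset.range (k + 1),
        ((m + j).descFactorial j : ℝ) * (laplaceP (k - j)).coeff (m + j) := by
    rw [laplaceQ_eq_sum, Polynomial.finset_sum_coeff]
    refine Finset.sum_congr rfl fun j _ => ?_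
    rw [Polynomial.coeff_iterate_derivative]
    simp [nsmul_eq_mul]
  constructor
  · intro n hmk hk
    have htr : (laplaceQ k).coeff m = ∑ j ∈ Finset.range (n + 1),
        ((m + j).descFactorial j : ℝ) * (laplaceP (k - j)).coeff (m + j) := by
      rw [hco, show k + 1 = (n + 1) + (k - n) by omega, Finset.sum_range_add]
      have h2 : ∑ i ∈ Finset.range (k - n),
          ((m + (n + 1 + i)).descFactorial (n + 1 + i) : ℝ) *
            (laplaceP (k - (n + 1 + i))).coeff (m + (n + 1 + i)) = 0 := by
        refine Finset.sum_eq_zero fun i _ => ?_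
        rw [laplaceP_coeff_zero_of_lt _ _ (by omega), mul_zero]
      rw [h2, add_zero]
    rw [htr, Finset.mul_sum]
    refine Finset.sum_congr rfl fun j hj => ?_
    rw [← mul_assoc, ← Nat.cast_mul]
    congr 2
    have := Nat.factorial_mul_descFactorial (Nat.le_add_left j m)
    simpa using this
  · intro hodd
    rw [hco]
    refine Finset.sum_eq_zero fun j hj => ?_
    have hj' : j ≤ k := by simpa [Nat.lt_succ_iff] using hj
    rw [laplaceP_coeff_zero_of_odd (k - j) (m + j) ?_, mul_zero]
    have heq : k - j + (m + j) = k + m := by omega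
    rw [heq]
    obtain ⟨c, hc⟩ := hodd
    exact ⟨(c + m).toNat, by omega⟩
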